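/- Let p and q be primes with q ≡ 1 (mod p), and let D = ⟨σ, τ ∣ στσ⁻¹ = τ^{q^f}⟩ and D_k = ⟨σ_k, τ_k ∣ σ_kτ_kσ_k⁻¹ = τ_k^q⟩ be profinite groups (here τ, τ_k topologically generate copies of the prime-to-p part of ẑ, and σ, σ_k generate copies of ẑ), with f a power of p. Then there is a continuous epimorphism from the free profinite product D ∗ ℤ_p onto D_k. -/

import Mathlib

private lemma conj_pow_rel {Q : Type*} [Group Q] {s t : Q} {q : ℕ}
    (hrel : s * t * s⁻¹ = t ^ q) : ∀ n : ℕ, s ^ n * t * (s ^ n)⁻¹ = t ^ q ^ n := by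
  intro n
  induction n with
  | zero => simp
  | succ n ih =>
    have h1 : s ^ (n + 1) * t * (s ^ (n + 1))⁻¹ = s * (s ^ n * t * (s ^ n)⁻¹) * s⁻¹ := by
      group
    rw [h1, ih, ← conj_pow, hrel, ← pow_mul, ← pow_succ']

/-- Finite-quotient form of: there is a continuous epimorphism from the free profinite
product `D ∗ ℤ_p` onto `D_k`, where `D = ⟨σ,τ ∣ στσ⁻¹ = τ^{q^f}⟩` and
`D_k = ⟨σ_k,τ_k ∣ σ_kτ_kσ_k⁻¹ = τ_k^q⟩` (with `τ, τ_k` topologically generating the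
prime-to-`p` part of `ẑ` and `σ, σ_k` generating `ẑ`), `f = p^e` a power of `p`, and
`q ≡ 1 (mod p)`.  Concretely: every finite quotient of `D_k` (generators `s, t` with
`sts⁻¹ = t^q` and `t` of prime-to-`p` order) admits compatible generators coming from
`D ∗ ℤ_p`: elements `s', t', x'` generating it, with `s't's'⁻¹ = t'^{q^{p^e}}`, the order
of `t'` prime to `p`, and the order of `x'` a power of `p`. -/
theorem stmt_14 (p q : ℕ) (hp : p.Prime) (hq : q.Prime) (hmod : q ≡ 1 [MOD p]) (e : ℕ)
    (Q : Type*) [Group Q] [Finite Q] (s t : Q)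
    (hgen : Subgroup.closure {s, t} = ⊤)
    (hrel : s * t * s⁻¹ = t ^ q)
    (hord : ¬ p ∣ orderOf t) :
    ∃ s' t' x' : Q,
      Subgroup.closure {s', t', x'} = ⊤ ∧
      s' * t' * s'⁻¹ = t' ^ (q ^ (p ^ e)) ∧
      ¬ p ∣ orderOf t' ∧
      ∃ m : ℕ, orderOf x' = p ^ m := by
  set n := orderOf s with hn
  have hn0 : n ≠ 0 := (orderOf_pos s).ne'
  set a := n.factorization p with ha
  set m := n / p ^ a with hm
  have hco : Nat.Coprime (p ^ a) m := Nat.Coprime.pow_left a (Nat.coprime_ordCompl hp hn0)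
  have hpm : Nat.Coprime p m := Nat.coprime_ordCompl hp hn0
  obtain ⟨k, hk1, hk2⟩ := Nat.chineseRemainder hco 1 0
  have hmk : m ∣ k := (Nat.modEq_zero_iff_dvd).mp hk2
  have hcopk : Nat.Coprime (p ^ a) k := by
    have h := (Nat.ModEq.gcd_eq hk1)
    simpa [Nat.Coprime, Nat.gcd_comm] using h
  have hnm : p ^ a * m = n := Nat.ordProj_mul_ordCompl_eq_self n p
  have hgcd : Nat.gcd n k = m := by
    rw [← hnm, Nat.Coprime.gcd_mul_left_cancel m hcopk, Nat.gcd_eq_left hmk]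
  refine ⟨s ^ p ^ e, t, s ^ k, ?_, ?_, hord, a, ?_⟩
  · -- generation
    set H := Subgroup.closure {s ^ p ^ e, t, s ^ k} with hH
    have hmem1 : s ^ p ^ e ∈ H := Subgroup.subset_closure (by simp)
    have hmem2 : s ^ k ∈ H := Subgroup.subset_closure (by simp)
    have hsn : (s : Q) ^ (n : ℤ) = 1 := by rw [zpow_natCast]; exact pow_orderOf_eq_one s
    have hmemm : s ^ (m : ℤ) ∈ H := by
      have hz : (s : Q) ^ (m : ℤ)
          = (s ^ (n : ℤ)) ^ Nat.gcdA n k * (s ^ (k : ℤ)) ^ Nat.gcdB n k := by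
        rw [← zpow_mul, ← zpow_mul, ← zpow_add, ← Nat.gcd_eq_gcd_ab, hgcd]
      rw [hz, hsn]
      simpa using zpow_mem (by rw [zpow_natCast]; exact hmem2 : (s : Q) ^ (k : ℤ) ∈ H) (Nat.gcdB n k)
    have hsmem : s ∈ H := by
      have hcoem : Nat.Coprime (p ^ e) m := Nat.Coprime.pow_left e hpm
      have hz : (s : Q) = (s ^ ((p ^ e : ℕ) : ℤ)) ^ Nat.gcdA (p ^ e) m
          * (s ^ (m : ℤ)) ^ Nat.gcdB (p ^ e) m := by
        rw [← zpow_mul, ← zpow_mul, ← zpow_add]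
        have hb : ((p ^ e : ℕ) : ℤ) * Nat.gcdA (p ^ e) m + (m : ℤ) * Nat.gcdB (p ^ e) m = 1 := by
          have := Nat.gcd_eq_gcd_ab (p ^ e) m
          rw [hcoem] at this
          push_cast at this ⊢
          linarith
        rw [hb, zpow_one]
      rw [hz]
      exact mul_mem (zpow_mem (by rw [zpow_natCast]; exact hmem1 : (s:Q) ^ ((p ^ e : ℕ) : ℤ) ∈ H) _)
        (zpow_mem hmemm _)
    rw [eq_top_iff, ← hgen, Subgroup.closure_le]
    rintro y hy
    simp only [Set.mem_insert_iff, Set.mem_singleton_iff] at hy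
    rcases hy with rfl | rfl
    · exact hsmem
    · exact Subgroup.subset_closure (by simp)
  · exact conj_pow_rel hrel (p ^ e)
  · rw [orderOf_pow, ← hn, hgcd]
    show n / (n / p ^ a) = p ^ a
    exact Nat.div_div_self (Nat.ordProj_dvd n p) hn0
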